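/- Let n_d ≥ 1, let σ_o, σ̃ > 0 with r_σ = σ̃²/σ_o², and let τ_δ > 0 satisfy r_σ (τ_δ² + τ_δ) < 1. Let X and Z be independent random vectors in ℝ^{n_d} whose coordinates are independent centered Gaussians with variances σ_o² and σ̃² respectively. Let U₁, U₂ ∈ ℝ be fixed (the accurate energies), and let Ũ₂ be the random variable Ũ₂ = U₂ − (1/(2σ_o²)) ( ‖Z‖² − 2⟨X, Z⟩ ) (the low-fidelity energy). Then the modified swapping factor S̃_m = [1 − (τ_δ + τ_δ²) r_σ]^{n_d/2} · exp( τ_δ (U₁ − Ũ₂) ) is an unbiased estimator of S = exp( τ_δ (U₁ − U₂) ), i.e. E[ S̃_m ] = exp( τ_δ (U₁ − U₂) ). -/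

import Mathlib

open MeasureTheory ProbabilityTheory
open Real
open scoped NNReal ENNReal


lemma my_integrable_exp_quad {p : ℝ} (q : ℝ) (hp : 0 < p) :
    Integrable (fun x : ℝ => Real.exp (-p*x^2 + q*x)) := by
  have h : ∀ x : ℝ, -p*x^2 + q*x = q^2/(4*p) + (-p * (x - q/(2*p))^2) := by
    intro x; field_simp; ring
  simp_rw [h, Real.exp_add]
  exact ((integrable_exp_neg_mul_sq hp).comp_sub_right (q/(2*p))).const_mul _

lemma my_integral_exp_quad {p : ℝ} (q : ℝ) (hp : 0 < p) :
    ∫ x : ℝ, Real.exp (-p*x^2 + q*x) = (π/p) ^ ((1:ℝ)/2) * Real.exp (q^2/(4*p)) := by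
  have hb : (-(p:ℂ)).re < 0 := by simpa using hp
  have h := integral_cexp_quadratic hb q 0
  have heq : ∀ x : ℝ, Complex.exp (-(p:ℂ) * x^2 + (q:ℂ) * x + 0) =
      ((Real.exp (-p*x^2 + q*x) : ℝ) : ℂ) := by
    intro x
    rw [Complex.ofReal_exp]
    push_cast
    ring_nf
  simp_rw [heq] at h
  have hπp : (0:ℝ) ≤ π/p := div_nonneg pi_pos.le hp.le
  have harg : (0 : ℂ) - (q:ℂ)^2/(4*(-(p:ℂ))) = ((q^2/(4*p) : ℝ) : ℂ) := by
    push_cast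
    field_simp
    ring
  have hrhs : ((π:ℂ) / -(-(p:ℂ))) ^ ((1:ℂ)/2) * Complex.exp (0 - (q:ℂ)^2/(4*(-(p:ℂ))))
      = (((π/p) ^ ((1:ℝ)/2) * Real.exp (q^2/(4*p)) : ℝ) : ℂ) := by
    rw [neg_neg, harg, show ((1:ℂ)/2) = (((1:ℝ)/2 : ℝ) : ℂ) by norm_num,
      ← Complex.ofReal_div, ← Complex.ofReal_cpow hπp, ← Complex.ofReal_exp, ← Complex.ofReal_mul]
  have hoi : ∫ x : ℝ, ((Real.exp (-p*x^2+q*x) : ℝ) : ℂ)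
      = ((∫ x : ℝ, Real.exp (-p*x^2+q*x) : ℝ) : ℂ) := integral_ofReal
  rw [hrhs, hoi] at h
  exact_mod_cast h

lemma my_gaussian_int {v b t : ℝ} (hv : 0 < v) (h1 : 2*b*v < 1) :
    Integrable (fun x : ℝ => Real.exp (b*x^2 + t*x)) (gaussianReal 0 v.toNNReal) ∧
    ∫ x, Real.exp (b*x^2 + t*x) ∂(gaussianReal 0 v.toNNReal)
      = (1-2*b*v) ^ (-((1:ℝ)/2)) * Real.exp (v*t^2/(2*(1-2*b*v))) := by
  have hv' : (v.toNNReal : ℝ≥0) ≠ 0 := by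
    simp [Real.toNNReal_eq_zero, not_le, hv]
  have hvc : ((v.toNNReal : ℝ≥0) : ℝ) = v := Real.coe_toNNReal _ hv.le
  have h2bv : 0 < 1 - 2*b*v := by linarith
  set p : ℝ := 1/(2*v) - b with hpdef
  have hp : 0 < p := by
    rw [hpdef]
    rw [sub_pos, lt_div_iff₀ (by positivity)]
    nlinarith
  have hmeas : gaussianReal 0 v.toNNReal
      = volume.withDensity fun x => ((Real.toNNReal (gaussianPDFReal 0 v.toNNReal x) : ℝ≥0) : ℝ≥0∞) :=
    gaussianReal_of_var_ne_zero 0 hv'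
  have hd : Measurable fun x => Real.toNNReal (gaussianPDFReal 0 v.toNNReal x) :=
    (measurable_gaussianPDFReal 0 v.toNNReal).real_toNNReal
  have hptwise : ∀ x : ℝ, (Real.toNNReal (gaussianPDFReal 0 v.toNNReal x) : ℝ≥0)
        • Real.exp (b*x^2 + t*x)
      = (Real.sqrt (2*π*v))⁻¹ * Real.exp (-p*x^2 + t*x) := by
    intro x
    rw [NNReal.smul_def, smul_eq_mul,
      Real.coe_toNNReal _ (gaussianPDFReal_nonneg _ _ x), gaussianPDFReal_def]
    simp only [hvc, sub_zero]
    rw [mul_assoc, ← Real.exp_add]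
    congr 2
    rw [hpdef]
    field_simp
    ring
  constructor
  · rw [hmeas, integrable_withDensity_iff_integrable_smul hd]
    simp_rw [hptwise]
    exact (my_integrable_exp_quad t hp).const_mul _
  · rw [hmeas, integral_withDensity_eq_integral_smul hd]
    simp_rw [hptwise]
    rw [integral_const_mul, my_integral_exp_quad t hp]
    have hπp : π/p = (2*π*v)/(1-2*b*v) := by
      rw [div_eq_div_iff hp.ne' (by linarith : (1:ℝ)-2*b*v ≠ 0), hpdef]
      field_simp
    have h2πv : (0:ℝ) < 2*π*v := by positivity
    have hexp : t^2/(4*p) = v*t^2/(2*(1-2*b*v)) := by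
      rw [div_eq_div_iff (by linarith : (4:ℝ)*p ≠ 0) (by linarith : (2:ℝ)*(1-2*b*v) ≠ 0), hpdef]
      field_simp
      ring
    rw [hπp, hexp, Real.div_rpow h2πv.le h2bv.le, Real.sqrt_eq_rpow, Real.rpow_neg h2bv.le]
    have hne : (2*π*v) ^ ((1:ℝ)/2) ≠ 0 := by positivity
    field_simp


lemma my_pi_prod_int {E : Type*} [MeasurableSpace E] (m : Measure E) [IsProbabilityMeasure m]
    (n : ℕ) (f : E → ℝ) :
    ∫ w : Fin n → E, ∏ i, f (w i) ∂(Measure.pi fun _ => m) = (∫ q, f q ∂m) ^ n := by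
  letI : MeasureSpace E := ⟨m⟩
  haveI : SigmaFinite (volume : Measure E) := inferInstanceAs (SigmaFinite m)
  have h := MeasureTheory.integral_fintype_prod_eq_pow (𝕜 := ℝ) (ι := Fin n) f (μ := m)
  simpa using h

lemma my_J {σo σt τδ : ℝ} (hσo : 0 < σo) (hσt : 0 < σt) (hτδ : 0 < τδ)
    (hr : (σt^2/σo^2)*(τδ^2+τδ) < 1) :
    Integrable (fun q : ℝ×ℝ => Real.exp ((τδ/(2*σo^2))*(q.2^2 - 2*q.1*q.2)))
      ((gaussianReal 0 (Real.toNNReal (σo^2))).prod (gaussianReal 0 (Real.toNNReal (σt^2)))) ∧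
    ∫ q : ℝ×ℝ, Real.exp ((τδ/(2*σo^2))*(q.2^2 - 2*q.1*q.2))
        ∂((gaussianReal 0 (Real.toNNReal (σo^2))).prod (gaussianReal 0 (Real.toNNReal (σt^2))))
      = (1 - (τδ + τδ^2)*(σt^2/σo^2)) ^ (-((1:ℝ)/2)) := by
  have hvo : 0 < σo^2 := by positivity
  have hvt : 0 < σt^2 := by positivity
  set a : ℝ := τδ/(2*σo^2) with hadef
  have ha : 0 < a := by positivity
  have hrexp : (σt^2/σo^2)*(τδ^2+τδ) = τδ^2*(σt^2/σo^2) + τδ*(σt^2/σo^2) := by ring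
  have hrs : 0 < σt^2/σo^2 := by positivity
  have hτ2 : 0 < τδ^2*(σt^2/σo^2) := by positivity
  have h2avt : 2*a*σt^2 = τδ*(σt^2/σo^2) := by rw [hadef]; field_simp
  have hDlt : 2*a*σt^2 < 1 := by rw [h2avt]; nlinarith
  have hD : 0 < 1 - 2*a*σt^2 := by linarith
  set β : ℝ := 2*a^2*σt^2/(1 - 2*a*σt^2) with hβdef
  have hnum : 4*a^2*σt^2*σo^2 = τδ^2*(σt^2/σo^2) := by
    rw [hadef]; field_simp; ring
  have hβ2 : 2*β*σo^2 = 4*a^2*σt^2*σo^2/(1 - 2*a*σt^2) := by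
    rw [hβdef]; field_simp [hD.ne']; ring
  have houter : 2*β*σo^2 < 1 := by
    rw [hβ2, div_lt_one hD, hnum, h2avt]; nlinarith
  have hB : 0 < 1 - 2*β*σo^2 := by linarith
  set μ := gaussianReal 0 (Real.toNNReal (σo^2))
  set ν := gaussianReal 0 (Real.toNNReal (σt^2))
  have hinner_eq : ∀ x : ℝ, (fun z : ℝ => Real.exp (a*(z^2 - 2*x*z)))
      = fun z : ℝ => Real.exp (a*z^2 + (-2*a*x)*z) := by
    intro x; funext z; congr 1; ring
  have hinner_int : ∀ x : ℝ, Integrable (fun z : ℝ => Real.exp (a*(z^2 - 2*x*z))) ν := by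
    intro x; rw [hinner_eq x]; exact (my_gaussian_int hvt hDlt).1
  have hexp_arg : ∀ x : ℝ, σt^2*(-2*a*x)^2/(2*(1 - 2*a*σt^2)) = β*x^2 + 0*x := by
    intro x; rw [hβdef]; field_simp; ring
  have hinner_val : ∀ x : ℝ, ∫ z, Real.exp (a*(z^2 - 2*x*z)) ∂ν
      = (1 - 2*a*σt^2) ^ (-((1:ℝ)/2)) * Real.exp (β*x^2 + 0*x) := by
    intro x
    rw [hinner_eq x, (my_gaussian_int hvt hDlt).2, hexp_arg x]
  have hfmeas : Measurable (fun q : ℝ×ℝ => Real.exp (a*(q.2^2 - 2*q.1*q.2))) := by fun_prop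
  have hfi : Integrable (fun q : ℝ×ℝ => Real.exp (a*(q.2^2 - 2*q.1*q.2))) (μ.prod ν) := by
    rw [integrable_prod_iff hfmeas.aestronglyMeasurable]
    constructor
    · exact Filter.Eventually.of_forall fun x => hinner_int x
    · simp only [Real.norm_eq_abs, abs_of_pos (Real.exp_pos _)]
      have : (fun x : ℝ => ∫ z, Real.exp (a*(z^2 - 2*x*z)) ∂ν)
          = fun x : ℝ => (1 - 2*a*σt^2) ^ (-((1:ℝ)/2)) * Real.exp (β*x^2 + 0*x) := by
        funext x; exact hinner_val x
      rw [this]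
      exact ((my_gaussian_int hvo houter).1).const_mul _
  refine ⟨hfi, ?_⟩
  rw [integral_prod _ hfi]
  simp only [hinner_val]
  rw [integral_const_mul, (my_gaussian_int hvo houter).2]
  have hzero : σo^2*(0:ℝ)^2/(2*(1 - 2*β*σo^2)) = 0 := by simp
  rw [hzero, Real.exp_zero, mul_one]
  rw [← Real.mul_rpow hD.le hB.le]
  congr 1
  have hDβ : (1-2*a*σt^2)*(2*β*σo^2) = 4*a^2*σt^2*σo^2 := by
    rw [hβ2, mul_div_cancel₀ _ hD.ne']
  calc (1-2*a*σt^2)*(1-2*β*σo^2)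
      = (1-2*a*σt^2) - (1-2*a*σt^2)*(2*β*σo^2) := by ring
    _ = 1 - τδ*(σt^2/σo^2) - τδ^2*(σt^2/σo^2) := by rw [hDβ, hnum, h2avt]
    _ = 1 - (τδ + τδ^2)*(σt^2/σo^2) := by ring


/-- Unbiasedness of the modified swapping factor in the multi-variance replica exchange
method: with `Ut₂ = U₂ − (1/(2σ_o²))(‖Z‖² − 2⟨X,Z⟩)` the low-fidelity energy, the factor
`S̃_m = (1 − (τ_δ + τ_δ²) r_σ)^{n_d/2} exp(τ_δ(U₁ − Ut₂))` satisfies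
`E[S̃_m] = exp(τ_δ(U₁ − U₂))`. -/
theorem modified_swap_factor_unbiased
    {Ω : Type*} [MeasurableSpace Ω] (P : Measure Ω) [IsProbabilityMeasure P]
    (nd : ℕ) (hnd : 1 ≤ nd)
    (σo σt : ℝ) (hσo : 0 < σo) (hσt : 0 < σt)
    (τδ : ℝ) (hτδ : 0 < τδ)
    (hr : (σt ^ 2 / σo ^ 2) * (τδ ^ 2 + τδ) < 1)
    (X Z : Ω → Fin nd → ℝ) (hX : Measurable X) (hZ : Measurable Z)
    (hindep : IndepFun X Z P)
    (hXlaw : Measure.map X P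
      = Measure.pi fun _ : Fin nd => gaussianReal 0 (Real.toNNReal (σo ^ 2)))
    (hZlaw : Measure.map Z P
      = Measure.pi fun _ : Fin nd => gaussianReal 0 (Real.toNNReal (σt ^ 2)))
    (U₁ U₂ : ℝ)
    (Ut₂ : Ω → ℝ)
    (hUt₂ : ∀ ω, Ut₂ ω = U₂ - (1 / (2 * σo ^ 2)) *
        ((∑ i, (Z ω i) ^ 2) - 2 * ∑ i, X ω i * Z ω i)) :
    ∫ ω, (1 - (τδ + τδ ^ 2) * (σt ^ 2 / σo ^ 2)) ^ ((nd : ℝ) / 2) *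
        Real.exp (τδ * (U₁ - Ut₂ ω)) ∂P
      = Real.exp (τδ * (U₁ - U₂)) := by
  have hvo : 0 < σo^2 := by positivity
  set a : ℝ := τδ/(2*σo^2) with hadef
  set μ := gaussianReal 0 (Real.toNNReal (σo^2)) with hμdef
  set ν := gaussianReal 0 (Real.toNNReal (σt^2)) with hνdef
  set f : ℝ×ℝ → ℝ := fun q => Real.exp (a*(q.2^2 - 2*q.1*q.2)) with hfdef
  set c : ℝ := (τδ + τδ^2)*(σt^2/σo^2) with hcdef
  have h1c : 0 < 1 - c := by
    have : (σt^2/σo^2)*(τδ^2+τδ) = c := by rw [hcdef]; ring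
    linarith [hr, this ▸ hr]
  obtain ⟨hfi, hJ⟩ := my_J hσo hσt hτδ hr
  -- the big function on pairs of vectors
  set G : (Fin nd → ℝ) × (Fin nd → ℝ) → ℝ :=
    fun p => Real.exp (a*((∑ i, (p.2 i)^2) - 2*∑ i, p.1 i * p.2 i)) with hGdef
  have hGmeas : Measurable G := by
    apply Real.measurable_exp.comp
    apply Measurable.const_mul
    apply Measurable.sub
    · exact Finset.measurable_sum _ fun i _ =>
        ((measurable_pi_apply i).comp measurable_snd).pow_const 2
    · exact (Finset.measurable_sum _ fun i _ =>
        (((measurable_pi_apply i).comp measurable_fst).mul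
          ((measurable_pi_apply i).comp measurable_snd))).const_mul 2
  -- split the exponential into a product over coordinates
  have hsplit : ∀ w : Fin nd → ℝ×ℝ,
      Real.exp (a*((∑ i, ((w i).2)^2) - 2*∑ i, (w i).1 * (w i).2)) = ∏ i, f (w i) := by
    intro w
    have harg : a*((∑ i, ((w i).2)^2) - 2*∑ i, (w i).1 * (w i).2)
        = ∑ i, a*(((w i).2)^2 - 2*(w i).1 * (w i).2) := by
      rw [Finset.mul_sum, ← Finset.sum_sub_distrib, Finset.mul_sum]
      exact Finset.sum_congr rfl fun i _ => by ring
    rw [harg, Real.exp_sum]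
  -- the measurable equivalence
  set e := MeasurableEquiv.arrowProdEquivProdArrow ℝ ℝ (Fin nd) with hedef
  have hMP := measurePreserving_arrowProdEquivProdArrow ℝ ℝ (Fin nd)
    (fun _ => μ) (fun _ => ν)
  -- main integral identity
  have hE1 : ∫ ω, G (X ω, Z ω) ∂P = (∫ q, f q ∂(μ.prod ν)) ^ nd := by
    calc ∫ ω, G (X ω, Z ω) ∂P
        = ∫ p, G p ∂(Measure.map (fun ω => (X ω, Z ω)) P) := by
          rw [integral_map (hX.prodMk hZ).aemeasurable hGmeas.aestronglyMeasurable]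
      _ = ∫ p, G p ∂((Measure.map X P).prod (Measure.map Z P)) := by
          rw [(indepFun_iff_map_prod_eq_prod_map_map hX.aemeasurable hZ.aemeasurable).mp hindep]
      _ = ∫ p, G p ∂((Measure.pi fun _ : Fin nd => μ).prod (Measure.pi fun _ : Fin nd => ν)) := by
          rw [hXlaw, hZlaw]
      _ = ∫ w, G (e w) ∂(Measure.pi fun _ : Fin nd => μ.prod ν) := (hMP.integral_comp' G).symm
      _ = ∫ w, ∏ i, f (w i) ∂(Measure.pi fun _ : Fin nd => μ.prod ν) := by
          refine integral_congr_ae (Filter.Eventually.of_forall fun w => ?_)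
          show G (e w) = ∏ i, f (w i)
          rw [show e w = (fun i => (w i).1, fun i => (w i).2) from rfl]
          exact hsplit w
      _ = (∫ q, f q ∂(μ.prod ν)) ^ nd := my_pi_prod_int (μ.prod ν) nd f
  -- rewrite the integrand
  have hpt : ∀ ω, Real.exp (τδ * (U₁ - Ut₂ ω))
      = Real.exp (τδ * (U₁ - U₂)) * G (X ω, Z ω) := by
    intro ω
    rw [hUt₂ ω, hGdef, ← Real.exp_add]
    congr 1
    rw [hadef]
    field_simp
    ring
  simp_rw [hpt, ← mul_assoc]
  rw [integral_const_mul, hE1, hJ]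
  -- final rpow arithmetic
  have hpow : ((1 - c) ^ (-((1:ℝ)/2))) ^ nd = (1 - c) ^ (-((nd:ℝ)/2)) := by
    rw [← Real.rpow_natCast ((1 - c) ^ (-((1:ℝ)/2))) nd, ← Real.rpow_mul h1c.le]
    congr 1
    ring
  rw [hpow]
  rw [show (1 - c) ^ ((nd:ℝ)/2) * Real.exp (τδ * (U₁ - U₂)) * (1 - c) ^ (-((nd:ℝ)/2))
      = (1 - c) ^ ((nd:ℝ)/2) * (1 - c) ^ (-((nd:ℝ)/2)) * Real.exp (τδ * (U₁ - U₂)) by ring]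
  rw [← Real.rpow_add h1c, add_neg_cancel, Real.rpow_zero, one_mul]
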